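/- arXiv:1808.08175 — 3 statements merged into one kernel-verified Lean document; each statement's English description precedes it below -/
import Mathlib

section
/- Determinant factorization through an injection: if A : U → V and B : V → V are linear maps between finite-dimensional real inner product spaces with A injective, and J : range(A) → V is the inclusion, then det(Aᵀ B A) = det(Aᵀ A) · det(J* B J), where J* B J is the compression of B to range(A) (i.e., P ∘ B restricted to range(A), with P the orthogonal projection onto range(A)). -/
lemma adjoint_subtype_eq_orthProj
    {V : Type*} [NormedAddCommGroup V] [InnerProductSpace ℝ V] [FiniteDimensional ℝ V]
    (W : Submodule ℝ V) :
    LinearMap.adjoint W.subtype = (Submodule.orthogonalProjectionOnto W).toLinearMap := by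
  symm
  rw [LinearMap.eq_adjoint_iff]
  intro x y
  exact W.inner_orthogonalProjectionOnto_eq_of_mem_right y x

/-- Determinant factorization through the inclusion of the range:
`det (Aᵀ B A) = det (Aᵀ A) * det (J* B J)` where `J* B J` is the compression of `B`
to `range A`, i.e. the orthogonal projection onto `range A` composed with `B`
restricted to `range A`. -/
theorem det_adjoint_comp_eq_det_mul_det_compression
    {U V : Type*}
    [NormedAddCommGroup U] [InnerProductSpace ℝ U] [FiniteDimensional ℝ U]
    [NormedAddCommGroup V] [InnerProductSpace ℝ V] [FiniteDimensional ℝ V]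
    (A : U →ₗ[ℝ] V) (hA : Function.Injective A) (B : V →ₗ[ℝ] V) :
    LinearMap.det ((LinearMap.adjoint A) ∘ₗ B ∘ₗ A)
      = LinearMap.det ((LinearMap.adjoint A) ∘ₗ A)
        * LinearMap.det
            (((Submodule.orthogonalProjectionOnto (LinearMap.range A)).toLinearMap
                ∘ₗ B ∘ₗ (LinearMap.range A).subtype :
              (LinearMap.range A) →ₗ[ℝ] (LinearMap.range A))) := by
  set W := LinearMap.range A with hW
  set e : U ≃ₗ[ℝ] W := LinearEquiv.ofInjective A hA with he
  have hAe : A = W.subtype ∘ₗ (e : U →ₗ[ℝ] W) := by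
    ext x
    rfl
  set M : W →ₗ[ℝ] W :=
    (Submodule.orthogonalProjectionOnto W).toLinearMap ∘ₗ B ∘ₗ W.subtype with hM
  have hadj : ∀ v : V, LinearMap.adjoint A v
      = LinearMap.adjoint (e : U →ₗ[ℝ] W) (Submodule.orthogonalProjectionOnto W v) := by
    intro v
    have h := congrArg LinearMap.adjoint hAe
    rw [LinearMap.adjoint_comp, adjoint_subtype_eq_orthProj] at h
    rw [h]
    rfl
  have key : (LinearMap.adjoint A) ∘ₗ B ∘ₗ A
      = ((LinearMap.adjoint A) ∘ₗ A) ∘ₗ ((e.symm : W →ₗ[ℝ] U) ∘ₗ M ∘ₗ (e : U →ₗ[ℝ] W)) := by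
    ext x
    have h1 : A (e.symm (M (e x))) = (M (e x) : V) := by
      conv_lhs => rw [hAe]
      simp
    simp only [LinearMap.comp_apply, LinearEquiv.coe_coe, h1]
    rw [hadj, hadj]
    simp only [hM, LinearMap.comp_apply, Submodule.coe_subtype,
      Submodule.orthogonalProjectionOnto_mem_subspace_eq_self]
    rfl
  rw [key, LinearMap.det_comp]
  congr 1
  have := LinearMap.det_conj M e.symm
  simpa [LinearMap.comp_assoc] using this
end

section
/- Jacobian of a graph-type map: let f : ℝ × N → ℝ^d (N an open set in ℝ^{m−1}, or a chart domain) be differentiable at (s,z) with spatial differential df of rank m−1, and define F(s,z) := (s, f(s,z)) : ℝ × N → ℝ^{d+1}. Then the Gram determinant satisfies det(dFᵀ dF) = (1 + |n · f'|²) · det(dfᵀ df), where f' = ∂f/∂s and n · f' is the component of f' orthogonal to the range of df; equivalently J_F = √(1 + V²) · J_f with V the normal speed |f' − P f'| component, where P is the orthogonal projection onto range(df). -/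
noncomputable section

lemma det_prodMap' {M N : Type*} [AddCommGroup M] [AddCommGroup N]
    [Module ℝ M] [Module ℝ N] [FiniteDimensional ℝ M] [FiniteDimensional ℝ N]
    (f : M →ₗ[ℝ] M) (g : N →ₗ[ℝ] N) :
    LinearMap.det (f.prodMap g) = LinearMap.det f * LinearMap.det g := by
  classical
  let b₁ := Module.finBasis ℝ M
  let b₂ := Module.finBasis ℝ N
  rw [← LinearMap.det_toMatrix (b₁.prod b₂), LinearMap.toMatrix_prodMap,
    Matrix.det_fromBlocks_zero₂₁, LinearMap.det_toMatrix, LinearMap.det_toMatrix]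

lemma det_one_of_sq {M : Type*} [AddCommGroup M] [Module ℝ M]
    (S H Sinv C : M →ₗ[ℝ] M) (hH : H ∘ₗ H = S) (hinv : S ∘ₗ Sinv = LinearMap.id)
    (hC : C ∘ₗ C = LinearMap.id) (hconj : C ∘ₗ (S ∘ₗ C) = Sinv) :
    LinearMap.det S = 1 := by
  have h1 : LinearMap.det S = (LinearMap.det H) ^ 2 := by
    rw [← hH, LinearMap.det_comp, sq]
  have hC2 : LinearMap.det C * LinearMap.det C = 1 := by
    rw [← LinearMap.det_comp, hC, LinearMap.det_id]
  have h2 : LinearMap.det S * LinearMap.det Sinv = 1 := by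
    rw [← LinearMap.det_comp, hinv, LinearMap.det_id]
  have h3 : LinearMap.det Sinv = LinearMap.det S := by
    rw [← hconj, LinearMap.det_comp, LinearMap.det_comp]
    calc LinearMap.det C * (LinearMap.det S * LinearMap.det C)
        = (LinearMap.det C * LinearMap.det C) * LinearMap.det S := by ring
      _ = LinearMap.det S := by rw [hC2, one_mul]
  rw [h3] at h2
  have h4 : LinearMap.det S = 1 ∨ LinearMap.det S = -1 := mul_self_eq_one_iff.mp h2
  rcases h4 with h | h
  · exact h
  · exfalso; nlinarith [sq_nonneg (LinearMap.det H)]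

namespace GramAux

variable {k : ℕ}

local notation "E₁" => EuclideanSpace ℝ (Fin k)

def Sc (w : E₁) (c : ℝ) : (ℝ × E₁) →ₗ[ℝ] (ℝ × E₁) :=
  (LinearMap.fst ℝ ℝ E₁).prod
    (LinearMap.snd ℝ ℝ E₁ + (LinearMap.fst ℝ ℝ E₁).smulRight (c • w))

def Tc (w : E₁) (c : ℝ) : (ℝ × E₁) →ₗ[ℝ] (ℝ × E₁) :=
  (LinearMap.fst ℝ ℝ E₁ + c • ((innerSL ℝ w).toLinearMap ∘ₗ LinearMap.snd ℝ ℝ E₁)).prod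
    (LinearMap.snd ℝ ℝ E₁)

def Cm : (ℝ × E₁) →ₗ[ℝ] (ℝ × E₁) :=
  ((-1 : ℝ) • LinearMap.fst ℝ ℝ E₁).prod (LinearMap.snd ℝ ℝ E₁)

lemma Sc_apply (w : E₁) (c : ℝ) (x : ℝ × E₁) : Sc w c x = (x.1, x.2 + x.1 • (c • w)) := rfl
lemma Tc_apply (w : E₁) (c : ℝ) (x : ℝ × E₁) :
    Tc w c x = (x.1 + c * inner ℝ w x.2, x.2) := rfl
lemma Cm_apply (x : ℝ × E₁) : Cm x = (-x.1, x.2) := by simp [Cm]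

lemma Sc_comp (w : E₁) (c c' : ℝ) : Sc w c ∘ₗ Sc w c' = Sc w (c + c') := by
  apply LinearMap.ext; intro x
  simp only [LinearMap.comp_apply, Sc_apply]
  refine Prod.ext rfl ?_
  simp only [smul_smul]
  module

lemma Tc_comp (w : E₁) (c c' : ℝ) : Tc w c ∘ₗ Tc w c' = Tc w (c + c') := by
  apply LinearMap.ext; intro x
  simp only [LinearMap.comp_apply, Tc_apply]
  refine Prod.ext ?_ rfl
  simp; ring

lemma Cm_Cm : (Cm : (ℝ × E₁) →ₗ[ℝ] (ℝ × E₁)) ∘ₗ Cm = LinearMap.id := by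
  apply LinearMap.ext; intro x
  simp [Cm_apply]

lemma Cm_Sc_Cm (w : E₁) : Cm ∘ₗ (Sc w 1 ∘ₗ Cm) = Sc w (-1) := by
  apply LinearMap.ext; intro x
  simp only [LinearMap.comp_apply, Sc_apply, Cm_apply]
  refine Prod.ext (neg_neg _) ?_
  module

lemma Cm_Tc_Cm (w : E₁) : Cm ∘ₗ (Tc w 1 ∘ₗ Cm) = Tc w (-1) := by
  apply LinearMap.ext; intro x
  simp only [LinearMap.comp_apply, Tc_apply, Cm_apply]
  refine Prod.ext ?_ rfl
  simp; ring

lemma Sc_zero (w : E₁) : Sc w 0 = LinearMap.id := by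
  apply LinearMap.ext; intro x
  simp [Sc_apply]

lemma Tc_zero (w : E₁) : Tc w 0 = LinearMap.id := by
  apply LinearMap.ext; intro x
  simp [Tc_apply]

def conjE (A : (ℝ × E₁) →ₗ[ℝ] (ℝ × E₁)) :
    WithLp 2 (ℝ × E₁) →ₗ[ℝ] WithLp 2 (ℝ × E₁) :=
  (WithLp.linearEquiv 2 ℝ (ℝ × E₁)).symm.toLinearMap ∘ₗ A ∘ₗ
    (WithLp.linearEquiv 2 ℝ (ℝ × E₁)).toLinearMap

lemma conjE_comp (A B : (ℝ × E₁) →ₗ[ℝ] (ℝ × E₁)) :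
    conjE A ∘ₗ conjE B = conjE (A ∘ₗ B) := rfl

lemma conjE_id : conjE (LinearMap.id : (ℝ × E₁) →ₗ[ℝ] (ℝ × E₁)) = LinearMap.id := rfl

lemma det_conjE (A : (ℝ × E₁) →ₗ[ℝ] (ℝ × E₁)) :
    LinearMap.det (conjE A) = LinearMap.det A := by
  have := LinearMap.det_conj A (WithLp.linearEquiv 2 ℝ (ℝ × E₁)).symm
  simpa [conjE] using this

end GramAux

noncomputable section

namespace GramAux

variable {k : ℕ}

local notation "E₁" => EuclideanSpace ℝ (Fin k)

lemma det_conjE_Sc (w : E₁) : LinearMap.det (conjE (Sc w 1)) = 1 := by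
  apply det_one_of_sq _ (conjE (Sc w (1/2))) (conjE (Sc w (-1))) (conjE Cm)
  · rw [conjE_comp, Sc_comp]; norm_num
  · rw [conjE_comp, Sc_comp]
    norm_num [Sc_zero, conjE_id]
  · rw [conjE_comp, Cm_Cm, conjE_id]
  · rw [conjE_comp, conjE_comp, Cm_Sc_Cm]

lemma det_conjE_Tc (w : E₁) : LinearMap.det (conjE (Tc w 1)) = 1 := by
  apply det_one_of_sq _ (conjE (Tc w (1/2))) (conjE (Tc w (-1))) (conjE Cm)
  · rw [conjE_comp, Tc_comp]; norm_num
  · rw [conjE_comp, Tc_comp]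
    norm_num [Tc_zero, conjE_id]
  · rw [conjE_comp, Cm_Cm, conjE_id]
  · rw [conjE_comp, conjE_comp, Cm_Tc_Cm]

end GramAux

noncomputable section

open GramAux in
/-- Jacobian of the graph-type map `F(s,z) = (s, f(s,z))`: at the level of differentials,
with `df` the injective spatial differential, `f'` the time derivative, and
`dF (a, u) = (a, a • f' + df u)`, the Gram determinants satisfy
`det (dFᵀ dF) = (1 + V²) * det (dfᵀ df)` where `V = ‖f' - P f'‖` and `P` is the orthogonal
projection onto `range df`. -/
theorem gram_det_graph_map {k d : ℕ}
    (df : EuclideanSpace ℝ (Fin k) →ₗ[ℝ] EuclideanSpace ℝ (Fin d))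
    (hdf : Function.Injective df) (f' : EuclideanSpace ℝ (Fin d)) :
    let E₁ := EuclideanSpace ℝ (Fin k)
    let E₂ := EuclideanSpace ℝ (Fin d)
    let dF : WithLp 2 (ℝ × E₁) →ₗ[ℝ] WithLp 2 (ℝ × E₂) :=
      (WithLp.linearEquiv 2 ℝ (ℝ × E₂)).symm.toLinearMap
        ∘ₗ ((LinearMap.fst ℝ ℝ E₁).prod
              ((LinearMap.fst ℝ ℝ E₁).smulRight f' + df.comp (LinearMap.snd ℝ ℝ E₁)))
        ∘ₗ (WithLp.linearEquiv 2 ℝ (ℝ × E₁)).toLinearMap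
    let V : ℝ := ‖f' - (Submodule.orthogonalProjection (LinearMap.range df) f' : E₂)‖
    LinearMap.det ((LinearMap.adjoint dF) ∘ₗ dF)
      = (1 + V ^ 2) * LinearMap.det ((LinearMap.adjoint df) ∘ₗ df) := by
  intro E₁ E₂ dF V
  classical
  set p : E₂ := (Submodule.orthogonalProjection (LinearMap.range df) f' : E₂) with hp
  obtain ⟨w, hw⟩ := LinearMap.mem_range.mp
    (Submodule.orthogonalProjection (LinearMap.range df) f').2
  have hn : f' - p ∈ (LinearMap.range df)ᗮ :=
    Submodule.sub_starProjection_mem_orthogonal (K := LinearMap.range df) f'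
  -- inner product facts
  have hfp : ∀ v : E₂, v ∈ LinearMap.range df →
      inner (𝕜 := ℝ) f' v = inner (𝕜 := ℝ) p v := by
    intro v hv
    have h0 : inner (𝕜 := ℝ) v (f' - p) = 0 :=
      (Submodule.mem_orthogonal _ _).mp hn v hv
    rw [inner_sub_right] at h0
    have := real_inner_comm v f'
    have := real_inner_comm v p
    linarith [h0]
  have hperp : inner (𝕜 := ℝ) p (f' - p) = 0 :=
    (Submodule.mem_orthogonal _ _).mp hn p ⟨w, hw⟩
  have hV2 : inner (𝕜 := ℝ) f' f' = V ^ 2 + inner (𝕜 := ℝ) p p := by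
    have hdecomp : f' = (f' - p) + p := by abel
    have hVdef : V ^ 2 = inner (𝕜 := ℝ) (f' - p) (f' - p) := by
      rw [real_inner_self_eq_norm_sq]
    calc inner (𝕜 := ℝ) f' f' = inner (𝕜 := ℝ) ((f' - p) + p) ((f' - p) + p) := by
          rw [← hdecomp]
      _ = inner (𝕜 := ℝ) (f' - p) (f' - p) + inner (𝕜 := ℝ) (f' - p) p
          + (inner (𝕜 := ℝ) p (f' - p) + inner (𝕜 := ℝ) p p) := by
          rw [inner_add_left, inner_add_right, inner_add_right]
      _ = V ^ 2 + inner (𝕜 := ℝ) p p := by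
          rw [real_inner_comm (f' - p) p] at *
          rw [hperp, hVdef]; ring
  -- the block-diagonal middle map
  set D : (ℝ × E₁) →ₗ[ℝ] (ℝ × E₁) :=
    (((1 : ℝ) + V ^ 2) • (LinearMap.id : ℝ →ₗ[ℝ] ℝ)).prodMap
      ((LinearMap.adjoint df) ∘ₗ df) with hD
  have key : (LinearMap.adjoint dF) ∘ₗ dF
      = conjE (Tc w 1) ∘ₗ (conjE D ∘ₗ conjE (Sc w 1)) := by
    apply LinearMap.ext; intro x
    apply ext_inner_left ℝ; intro y
    rw [LinearMap.comp_apply, LinearMap.adjoint_inner_right]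
    have hL : inner (𝕜 := ℝ) (dF y) (dF x)
        = y.ofLp.1 * x.ofLp.1 + inner (𝕜 := ℝ) (y.ofLp.1 • f' + df y.ofLp.2) (x.ofLp.1 • f' + df x.ofLp.2) := by
      rw [WithLp.prod_inner_apply]; congr 1; simp [dF, mul_comm]
    have hR : inner (𝕜 := ℝ) y ((conjE (Tc w 1) ∘ₗ (conjE D ∘ₗ conjE (Sc w 1))) x)
        = y.ofLp.1 * ((1 + V ^ 2) * x.ofLp.1
              + 1 * inner (𝕜 := ℝ) w ((LinearMap.adjoint df) (df (x.ofLp.2 + x.ofLp.1 • ((1:ℝ) • w)))))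
          + inner (𝕜 := ℝ) y.ofLp.2 ((LinearMap.adjoint df) (df (x.ofLp.2 + x.ofLp.1 • ((1:ℝ) • w)))) := by
      simp only [hD, LinearMap.comp_apply, conjE, Tc, Sc, LinearMap.coe_comp,
        Function.comp_apply, LinearEquiv.coe_coe, WithLp.linearEquiv_apply,
        WithLp.linearEquiv_symm_apply, LinearMap.prod_apply, Pi.prod, LinearMap.add_apply,
        LinearMap.fst_apply, LinearMap.snd_apply, LinearMap.smulRight_apply,
        LinearMap.smul_apply, LinearMap.id_apply, LinearMap.prodMap_apply, Prod.map,
        WithLp.prod_inner_apply, innerSL_apply_apply, ContinuousLinearMap.coe_coe, smul_eq_mul,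
        RCLike.inner_apply, conj_trivial, Equiv.apply_symm_apply, WithLp.coe_linearEquiv,
        WithLp.coe_symm_linearEquiv, WithLp.ofLp_toLp]
      exact congrArg₂ (· + ·) (mul_comm _ _) rfl
    rw [hL, hR, LinearMap.adjoint_inner_right, LinearMap.adjoint_inner_right]
    simp only [one_smul, one_mul, map_add, map_smul, inner_add_left, inner_add_right,
      real_inner_smul_left, real_inner_smul_right, hw]
    have h1 : inner (𝕜 := ℝ) f' (df x.ofLp.2) = inner (𝕜 := ℝ) p (df x.ofLp.2) :=
      hfp _ (LinearMap.mem_range_self df x.ofLp.2)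
    have h2 : inner (𝕜 := ℝ) (df y.ofLp.2) f' = inner (𝕜 := ℝ) (df y.ofLp.2) p :=
      calc inner (𝕜 := ℝ) (df y.ofLp.2) f' = inner (𝕜 := ℝ) f' (df y.ofLp.2) := real_inner_comm _ _
        _ = inner (𝕜 := ℝ) p (df y.ofLp.2) := hfp _ (LinearMap.mem_range_self df y.ofLp.2)
        _ = inner (𝕜 := ℝ) (df y.ofLp.2) p := real_inner_comm _ _
    rw [h1, h2, hV2]
    ring
  rw [key, LinearMap.det_comp, LinearMap.det_comp, det_conjE_Tc, det_conjE_Sc, det_conjE,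
    hD, det_prodMap', LinearMap.det_smul, LinearMap.det_id, Module.finrank_self, pow_one]
  ring
end
end
end
end

section
/- Combining the block determinant formula with the compression identity: for an injective linear map df : ℝ^{m−1} → ℝ^d and a vector f' ∈ ℝ^d, det( dfᵀ df − (dfᵀ f') ⊗ (dfᵀ f') / (|f'|² + 1) ) = det(dfᵀ df) · (1 − |P f'|² / (|f'|² + 1)), where P is the orthogonal projection onto range(df). -/
noncomputable section

private lemma det_id_sub_rankOne_aux {k : ℕ} (c : ℝ) (x w : EuclideanSpace ℝ (Fin k)) :
    LinearMap.det (LinearMap.id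
        - c • ((LinearMap.toSpanSingleton ℝ _ x).comp (innerSL ℝ w).toLinearMap))
      = 1 - c * inner ℝ w x := by
  classical
  let b := (EuclideanSpace.basisFun (Fin k) ℝ).toBasis
  rw [← LinearMap.det_toMatrix b]
  have h : LinearMap.toMatrix b b
      (LinearMap.id - c • ((LinearMap.toSpanSingleton ℝ _ x).comp (innerSL ℝ w).toLinearMap))
      = 1 + Matrix.replicateCol Unit (fun i => -c * x i) * Matrix.replicateRow Unit (fun i => w i) := by
    ext i j
    simp [LinearMap.toMatrix_apply, b, Matrix.one_apply, Matrix.mul_apply,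
      LinearMap.toSpanSingleton_apply, PiLp.inner_apply, EuclideanSpace.basisFun_apply,
      EuclideanSpace.single_apply, Finset.mul_sum, mul_comm, mul_ite]
    ring
  rw [h, Matrix.det_one_add_replicateCol_mul_replicateRow]
  simp [dotProduct, PiLp.inner_apply, Finset.mul_sum]
  rw [sub_eq_add_neg, add_right_inj, neg_inj]
  exact Finset.sum_congr rfl fun i _ => by ring

/-- Determinant of the Gram matrix minus a rank-one term:
`det( dfᵀ df − (dfᵀ f') ⊗ (dfᵀ f') / (|f'|² + 1) ) = det(dfᵀ df) · (1 − |P f'|²/(|f'|²+1))`,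
where `P` is the orthogonal projection onto `range df`. -/
theorem det_gram_sub_rankOne {k d : ℕ}
    (df : EuclideanSpace ℝ (Fin k) →ₗ[ℝ] EuclideanSpace ℝ (Fin d))
    (hdf : Function.Injective df) (f' : EuclideanSpace ℝ (Fin d)) :
    let w : EuclideanSpace ℝ (Fin k) := LinearMap.adjoint df f'
    LinearMap.det
        ((LinearMap.adjoint df) ∘ₗ df
          - (‖f'‖ ^ 2 + 1)⁻¹ •
              ((LinearMap.toSpanSingleton ℝ _ w).comp (innerSL ℝ w).toLinearMap))
      = LinearMap.det ((LinearMap.adjoint df) ∘ₗ df)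
          * (1 - ‖(Submodule.orthogonalProjection (LinearMap.range df) f' : EuclideanSpace ℝ (Fin d))‖ ^ 2
                  / (‖f'‖ ^ 2 + 1)) := by
  intro w
  set G : EuclideanSpace ℝ (Fin k) →ₗ[ℝ] EuclideanSpace ℝ (Fin k) :=
    (LinearMap.adjoint df) ∘ₗ df with hGdef
  set c : ℝ := (‖f'‖ ^ 2 + 1)⁻¹ with hc
  -- G is injective, hence bijective
  have hGinj : Function.Injective G := by
    rw [← LinearMap.ker_eq_bot]
    rw [LinearMap.ker_eq_bot']
    intro m hm
    have h1 : (inner ℝ (G m) m : ℝ) = 0 := by rw [hm]; simp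
    have h2 : (inner ℝ (df m) (df m) : ℝ) = 0 := by
      rwa [hGdef, LinearMap.comp_apply, LinearMap.adjoint_inner_left] at h1
    have := inner_self_eq_zero (𝕜 := ℝ).mp h2
    exact hdf (by simpa using this)
  have hGsurj : Function.Surjective G := LinearMap.injective_iff_surjective.mp hGinj
  let e := LinearEquiv.ofBijective G ⟨hGinj, hGsurj⟩
  set x : EuclideanSpace ℝ (Fin k) := e.symm w with hxdef
  have hx : G x = w := e.apply_symm_apply w
  -- identify the projection
  have hP : (Submodule.orthogonalProjection (LinearMap.range df) f' : EuclideanSpace ℝ (Fin d)) = df x := by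
    have hmem : df x ∈ LinearMap.range df := LinearMap.mem_range_self df x
    have := Submodule.eq_starProjection_of_mem_of_inner_eq_zero (K := LinearMap.range df)
      (u := f') hmem ?_
    · exact this
    · rintro y ⟨z, rfl⟩
      have : (inner ℝ (f' - df x) (df z) : ℝ)
          = inner ℝ (LinearMap.adjoint df (f' - df x)) z := by
        rw [LinearMap.adjoint_inner_left]
      rw [this, map_sub]
      have : LinearMap.adjoint df (df x) = G x := rfl
      rw [this, hx]
      simp [w]
  -- norm of projection
  have hnorm : ‖(Submodule.orthogonalProjection (LinearMap.range df) f' : EuclideanSpace ℝ (Fin d))‖ ^ 2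
      = inner ℝ w x := by
    rw [hP, ← real_inner_self_eq_norm_sq]
    calc (inner ℝ (df x) (df x) : ℝ) = inner ℝ (LinearMap.adjoint df (df x)) x := by
            rw [LinearMap.adjoint_inner_left]
      _ = inner ℝ (G x) x := rfl
      _ = inner ℝ w x := by rw [hx]
  -- factorization
  have hfac : G - c • ((LinearMap.toSpanSingleton ℝ _ w).comp (innerSL ℝ w).toLinearMap)
      = G ∘ₗ (LinearMap.id
          - c • ((LinearMap.toSpanSingleton ℝ _ x).comp (innerSL ℝ w).toLinearMap)) := by
    ext v
    simp only [LinearMap.sub_apply, LinearMap.comp_apply, LinearMap.smul_apply,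
      LinearMap.id_apply, ContinuousLinearMap.coe_coe, innerSL_apply_apply,
      LinearMap.toSpanSingleton_apply, map_sub, map_smul]
    rw [hx]
  rw [hfac, LinearMap.det_comp, det_id_sub_rankOne_aux, hnorm]
  rw [div_eq_inv_mul]
end
end
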